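/- arXiv:math/0604526 — 10 statements merged into one kernel-verified Lean document; each statement's English description precedes it below -/
import Mathlib

section
/- Let E be a finite-dimensional real inner product space, b ∈ E a unit vector, and c a real constant. Define G : E → E by G(y) = c · q(y) · v(y), where v(y) = y - ⟨b,y⟩b and q(y) = ‖v(y)‖. Then at every y ∈ E with q(y) ≠ 0 the map G is three times continuously differentiable, and its third derivative, as a symmetric trilinear map, is given by D³G(y)(h₁,h₂,h₃) = (c / q(y)) · ( η_y(h₁)·η̄_y(h₂,h₃) + η_y(h₂)·η̄_y(h₁,h₃) + η_y(h₃)·η̄_y(h₁,h₂) ), where η_y(h) = h - ⟨b,h⟩b - (⟨v(y),h⟩/q(y)²)v(y) and η̄_y(h,k) = ⟨h,k⟩ - ⟨b,h⟩⟨b,k⟩ - ⟨v(y),h⟩⟨v(y),k⟩/q(y)². -/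
open RealInnerProductSpace Filter

set_option maxHeartbeats 1000000

/-- The non-quadratic part `G(y) = c·q(y)·v(y)` of the Landsberg-type spray coefficients
is `C³` at every `y` with `q y ≠ 0`, and its third derivative is the symmetric trilinear map
`(h₁,h₂,h₃) ↦ (c/q)·(η(h₁)η̄(h₂,h₃) + η(h₂)η̄(h₁,h₃) + η(h₃)η̄(h₁,h₂))`. -/
theorem stmt_3 {E : Type*} [NormedAddCommGroup E] [InnerProductSpace ℝ E]
    [FiniteDimensional ℝ E]
    (b : E) (hb : ‖b‖ = 1) (c : ℝ)
    (v : E → E) (hv : v = fun y => y - (inner ℝ b y : ℝ) • b)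
    (q : E → ℝ) (hq : q = fun y => ‖v y‖)
    (G : E → E) (hG : G = fun y => (c * q y) • v y)
    (η : E → E → E)
    (hη : η = fun y h => h - (inner ℝ b h : ℝ) • b - ((inner ℝ (v y) h : ℝ) / q y ^ 2) • v y)
    (ηb : E → E → E → ℝ)
    (hηb : ηb = fun y h k =>
      (inner ℝ h k : ℝ) - (inner ℝ b h : ℝ) * (inner ℝ b k : ℝ)
        - (inner ℝ (v y) h : ℝ) * (inner ℝ (v y) k : ℝ) / q y ^ 2)
    (y : E) (hqy : q y ≠ 0) :
    ContDiffAt ℝ 3 G y ∧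
      ∀ h₁ h₂ h₃ : E,
        iteratedFDeriv ℝ 3 G y ![h₁, h₂, h₃] =
          (c / q y) •
            (ηb y h₂ h₃ • η y h₁ + ηb y h₁ h₃ • η y h₂ + ηb y h₁ h₂ • η y h₃) := by
  set A : E →L[ℝ] E := ContinuousLinearMap.id ℝ E - (innerSL ℝ b).smulRight b with hAdef
  have hA : ∀ z : E, A z = z - ⟪b, z⟫ • b := by
    intro z; simp [hAdef]
  have ibb : ⟪b, b⟫ = (1 : ℝ) := by
    rw [real_inner_self_eq_norm_mul_norm, hb]; norm_num
  have hAb : ∀ u : E, ⟪A u, b⟫ = (0 : ℝ) := by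
    intro u
    simp [hA, inner_sub_left, real_inner_smul_left, ibb, real_inner_comm b u, hb]
  have hAr : ∀ u w : E, ⟪A u, A w⟫ = ⟪A u, w⟫ := by
    intro u w
    rw [hA w, inner_sub_right, real_inner_smul_right, hAb u, mul_zero, sub_zero]
  have hAA : ∀ u w : E, ⟪A u, A w⟫ = ⟪u, w⟫ - ⟪b, u⟫ * ⟪b, w⟫ := by
    intro u w
    rw [hAr u w, hA u, inner_sub_left, real_inner_smul_left]
  have hvA : ∀ z : E, v z = A z := fun z => by rw [hv, hA]
  have hqA : ∀ z : E, q z = ‖A z‖ := fun z => by rw [hq]; simp only [hvA z]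
  have hGA : G = fun z => (c * ‖A z‖) • A z := by
    funext z; rw [hG]; dsimp only; rw [hqA, hvA]
  have hQ : ‖A y‖ ≠ 0 := by rw [← hqA]; exact hqy
  have hAy : A y ≠ 0 := by simpa using hQ
  -- derivative of the norm
  have hs' : ∀ z : E, A z ≠ 0 →
      HasFDerivAt (fun w => ‖A w‖) (‖A z‖⁻¹ • ((innerSL ℝ (A z)).comp A)) z := by
    intro z hz
    have hzq : ‖A z‖ ≠ 0 := by simpa using hz
    have hip : HasFDerivAt (fun w => ⟪A w, A w⟫)
        ((fderivInnerCLM ℝ (A z, A z)).comp ((A : E →L[ℝ] E).prod A)) z :=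
      (A.hasFDerivAt).inner ℝ (A.hasFDerivAt)
    have hne : ⟪A z, A z⟫ ≠ (0 : ℝ) := by
      rw [real_inner_self_eq_norm_sq]; positivity
    have h2 := hip.sqrt hne
    have hfun : (fun w => Real.sqrt ⟪A w, A w⟫) = fun w => ‖A w‖ := by
      funext w; rw [real_inner_self_eq_norm_mul_norm, Real.sqrt_mul_self (norm_nonneg _)]
    rw [hfun] at h2
    convert h2 using 1
    ext h
    rw [real_inner_self_eq_norm_mul_norm, Real.sqrt_mul_self (norm_nonneg _)]
    simp only [ContinuousLinearMap.smul_apply, ContinuousLinearMap.comp_apply,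
      ContinuousLinearMap.prod_apply, fderivInnerCLM_apply, innerSL_apply_apply, smul_eq_mul]
    rw [real_inner_comm (A h) (A z)]
    field_simp
    ring
  -- C³ smoothness at every point where `A z ≠ 0`
  have hC : ∀ z : E, A z ≠ 0 → ContDiffAt ℝ 3 G z := by
    intro z hz
    rw [hGA]
    exact (contDiffAt_const.mul ((contDiffAt_norm ℝ hz).comp z A.contDiff.contDiffAt)).smul
      A.contDiff.contDiffAt
  refine ⟨hC y hAy, ?_⟩
  intro h₁ h₂ h₃
  -- first derivative
  have hDG : ∀ z : E, A z ≠ 0 → HasFDerivAt G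
      ((c * ‖A z‖) • (A : E →L[ℝ] E)
        + (c • (‖A z‖⁻¹ • ((innerSL ℝ (A z)).comp A))).smulRight (A z)) z := by
    intro z hz
    rw [hGA]
    exact ((hs' z hz).const_mul c).smul A.hasFDerivAt
  have hfd3 : ∀ z : E, A z ≠ 0 → fderiv ℝ G z h₃ =
      (c * ‖A z‖) • A h₃ + (c * (‖A z‖⁻¹ * ⟪A z, A h₃⟫)) • A z := by
    intro z hz
    rw [(hDG z hz).fderiv]
    simp only [ContinuousLinearMap.add_apply, ContinuousLinearMap.smul_apply,
      ContinuousLinearMap.smulRight_apply, ContinuousLinearMap.comp_apply,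
      ContinuousLinearMap.coe_comp', Function.comp_apply, innerSL_apply_apply, smul_eq_mul]
    try module
  -- second derivative (applied to h₂, h₃)
  have hfd23 : ∀ z : E, A z ≠ 0 →
      fderiv ℝ (fun w => (c * ‖A w‖) • A h₃ + (c * (‖A w‖⁻¹ * ⟪A w, A h₃⟫)) • A w) z h₂ =
      (c * (‖A z‖⁻¹ * ⟪A z, A h₃⟫)) • A h₂ + (c * (‖A z‖⁻¹ * ⟪A z, A h₂⟫)) • A h₃
        + (c * (‖A z‖⁻¹ * ⟪A h₂, A h₃⟫)
            - c * (‖A z‖⁻¹ * (‖A z‖⁻¹ * (‖A z‖⁻¹ * (⟪A z, A h₂⟫ * ⟪A z, A h₃⟫))))) • A z := by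
    intro z hz
    have hzq : ‖A z‖ ≠ 0 := by simpa using hz
    have hd : HasFDerivAt
        (fun w => (c * ‖A w‖) • A h₃ + (c * (‖A w‖⁻¹ * ⟪A w, A h₃⟫)) • A w) _ z :=
      (((hs' z hz).const_mul c).smul (hasFDerivAt_const (A h₃) z)).add
        (((((hasDerivAt_inv hzq).comp_hasFDerivAt z (hs' z hz)).mul
          ((A.hasFDerivAt).inner ℝ (hasFDerivAt_const (A h₃) z))).const_mul c).smul
            A.hasFDerivAt)
    rw [hd.fderiv]
    simp only [ContinuousLinearMap.add_apply, ContinuousLinearMap.smul_apply,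
      ContinuousLinearMap.smulRight_apply, ContinuousLinearMap.comp_apply,
      ContinuousLinearMap.coe_comp', Function.comp_apply, innerSL_apply_apply, smul_eq_mul,
      ContinuousLinearMap.zero_apply, ContinuousLinearMap.prod_apply,
      fderivInnerCLM_apply, inner_zero_right, add_zero, zero_add, smul_zero,
      ContinuousLinearMap.coe_zero, Pi.zero_apply, Pi.mul_apply, Pi.sub_apply]
    match_scalars <;> field_simp <;> ring
  -- differentiability of the first and second derivatives
  have hd1 : ∀ z : E, A z ≠ 0 → DifferentiableAt ℝ (fderiv ℝ G) z := fun z hz =>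
    ((hC z hz).fderiv_right (m := 2) (by norm_num)).differentiableAt (by norm_num)
  have hd2 : DifferentiableAt ℝ (fderiv ℝ (fderiv ℝ G)) y :=
    (((hC y hAy).fderiv_right (m := 2) (by norm_num)).fderiv_right (m := 1)
      (by norm_num)).differentiableAt (by norm_num)
  -- identification of the second derivative applied to `h₂ h₃`
  have E2 : ∀ z : E, A z ≠ 0 → fderiv ℝ (fderiv ℝ G) z h₂ h₃ =
      (c * (‖A z‖⁻¹ * ⟪A z, A h₃⟫)) • A h₂ + (c * (‖A z‖⁻¹ * ⟪A z, A h₂⟫)) • A h₃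
        + (c * (‖A z‖⁻¹ * ⟪A h₂, A h₃⟫)
            - c * (‖A z‖⁻¹ * (‖A z‖⁻¹ * (‖A z‖⁻¹ * (⟪A z, A h₂⟫ * ⟪A z, A h₃⟫))))) • A z := by
    intro z hz
    have e1 : fderiv ℝ (fun w => fderiv ℝ G w h₃) z = (fderiv ℝ (fderiv ℝ G) z).flip h₃ := by
      rw [fderiv_clm_apply (hd1 z hz) (differentiableAt_const h₃)]
      simp
    have e2 : (fun w => fderiv ℝ G w h₃) =ᶠ[nhds z]
        (fun w => (c * ‖A w‖) • A h₃ + (c * (‖A w‖⁻¹ * ⟪A w, A h₃⟫)) • A w) := by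
      filter_upwards [A.continuous.continuousAt.eventually_ne hz] with w hw using hfd3 w hw
    calc fderiv ℝ (fderiv ℝ G) z h₂ h₃ = (fderiv ℝ (fderiv ℝ G) z).flip h₃ h₂ := by
          rw [ContinuousLinearMap.flip_apply]
      _ = fderiv ℝ (fun w => fderiv ℝ G w h₃) z h₂ := by rw [e1]
      _ = fderiv ℝ (fun w => (c * ‖A w‖) • A h₃ + (c * (‖A w‖⁻¹ * ⟪A w, A h₃⟫)) • A w) z h₂ := by
          rw [e2.fderiv_eq]
      _ = _ := hfd23 z hz
  -- reduce `iteratedFDeriv` to a triple `fderiv`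
  have link : iteratedFDeriv ℝ 3 G y ![h₁, h₂, h₃] =
      fderiv ℝ (fderiv ℝ (fderiv ℝ G)) y h₁ h₂ h₃ := by
    have h := iteratedFDeriv_succ_apply_right (𝕜 := ℝ) (f := G) (x := y) (n := 2)
      ![h₁, h₂, h₃]
    rw [iteratedFDeriv_two_apply] at h
    exact h
  have p1 : fderiv ℝ (fun z => fderiv ℝ (fderiv ℝ G) z h₂) y =
      (fderiv ℝ (fderiv ℝ (fderiv ℝ G)) y).flip h₂ := by
    rw [fderiv_clm_apply hd2 (differentiableAt_const h₂)]
    simp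
  have p2 : fderiv ℝ (fun z => fderiv ℝ (fderiv ℝ G) z h₂ h₃) y =
      (fderiv ℝ (fun z => fderiv ℝ (fderiv ℝ G) z h₂) y).flip h₃ := by
    rw [fderiv_clm_apply (hd2.clm_apply (differentiableAt_const h₂))
      (differentiableAt_const h₃)]
    simp
  have peel : fderiv ℝ (fderiv ℝ (fderiv ℝ G)) y h₁ h₂ h₃ =
      fderiv ℝ (fun z => fderiv ℝ (fderiv ℝ G) z h₂ h₃) y h₁ := by
    rw [p2, p1]
    simp [ContinuousLinearMap.flip_apply]
  have evg : (fun z => fderiv ℝ (fderiv ℝ G) z h₂ h₃) =ᶠ[nhds y]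
      (fun z => (c * (‖A z‖⁻¹ * ⟪A z, A h₃⟫)) • A h₂ + (c * (‖A z‖⁻¹ * ⟪A z, A h₂⟫)) • A h₃
        + (c * (‖A z‖⁻¹ * ⟪A h₂, A h₃⟫)
            - c * (‖A z‖⁻¹ * (‖A z‖⁻¹ * (‖A z‖⁻¹ * (⟪A z, A h₂⟫ * ⟪A z, A h₃⟫))))) • A z) := by
    filter_upwards [A.continuous.continuousAt.eventually_ne hAy] with z hz using E2 z hz
  -- third derivative
  have hinv : HasFDerivAt (fun w => ‖A w‖⁻¹)
      ((-(‖A y‖ ^ 2)⁻¹) • (‖A y‖⁻¹ • ((innerSL ℝ (A y)).comp A))) y :=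
    (hasDerivAt_inv hQ).comp_hasFDerivAt y (hs' y hAy)
  have e2y := (A.hasFDerivAt (x := y)).inner ℝ (hasFDerivAt_const (A h₂) y)
  have e3y := (A.hasFDerivAt (x := y)).inner ℝ (hasFDerivAt_const (A h₃) y)
  have T1 := ((hinv.mul e3y).const_mul c).smul (hasFDerivAt_const (A h₂) y)
  have T2 := ((hinv.mul e2y).const_mul c).smul (hasFDerivAt_const (A h₃) y)
  have T3 := (((hinv.mul (hasFDerivAt_const (⟪A h₂, A h₃⟫ : ℝ) y)).const_mul c).sub
      ((hinv.mul (hinv.mul (hinv.mul (e2y.mul e3y)))).const_mul c)).smul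
      (A.hasFDerivAt (x := y))
  have hdg23 : HasFDerivAt
      (fun z => (c * (‖A z‖⁻¹ * ⟪A z, A h₃⟫)) • A h₂ + (c * (‖A z‖⁻¹ * ⟪A z, A h₂⟫)) • A h₃
        + (c * (‖A z‖⁻¹ * ⟪A h₂, A h₃⟫)
            - c * (‖A z‖⁻¹ * (‖A z‖⁻¹ * (‖A z‖⁻¹ * (⟪A z, A h₂⟫ * ⟪A z, A h₃⟫))))) • A z) _ y :=
    (T1.add T2).add T3
  -- clean expressions for η and η̄
  have hη' : ∀ h : E, η y h = A h - (⟪A y, A h⟫ / ‖A y‖ ^ 2) • A y := by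
    intro h
    rw [hη]
    dsimp only
    rw [hvA y, hqA y, ← hAr y h, ← hA h]
  have hηb' : ∀ h k : E, ηb y h k = ⟪A h, A k⟫ - ⟪A y, A h⟫ * ⟪A y, A k⟫ / ‖A y‖ ^ 2 := by
    intro h k
    rw [hηb]
    dsimp only
    rw [hvA y, hqA y, ← hAr y h, ← hAr y k, ← hAA h k]
  rw [link, peel, evg.fderiv_eq, hdg23.fderiv, hqA y]
  simp only [hη', hηb']
  simp only [ContinuousLinearMap.add_apply, ContinuousLinearMap.smul_apply,
    ContinuousLinearMap.smulRight_apply, ContinuousLinearMap.comp_apply,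
    ContinuousLinearMap.coe_comp', Function.comp_apply, innerSL_apply_apply, smul_eq_mul,
    ContinuousLinearMap.zero_apply, ContinuousLinearMap.prod_apply,
    fderivInnerCLM_apply, inner_zero_right, add_zero, zero_add, smul_zero,
    ContinuousLinearMap.coe_zero, Pi.zero_apply, Pi.mul_apply, Pi.sub_apply, ContinuousLinearMap.sub_apply]
  match_scalars <;> field_simp <;> ring
end

section
/- Let E be a finite-dimensional real inner product space, b ∈ E a unit vector, and c a real constant. Define G : E → E by G(y) = c · q(y) · v(y), where v(y) = y - ⟨b,y⟩b and q(y) = ‖v(y)‖. Then for every y ∈ E with q(y) ≠ 0, every h₁,h₂,h₃ ∈ E, and every pair of real numbers p₁, p₂, one has ⟨ p₁·b + p₂·y , D³G(y)(h₁,h₂,h₃) ⟩ = 0. In particular ⟨b, D³G(y)(h₁,h₂,h₃)⟩ = 0 and ⟨y, D³G(y)(h₁,h₂,h₃)⟩ = 0. -/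
open scoped RealInnerProductSpace
open Filter Real

section Aux

variable {E : Type*} [NormedAddCommGroup E] [InnerProductSpace ℝ E]

private lemma inner_iteratedFDeriv_three'
    (G : E → E) (y : E) (ψ : E)
    (hdG : ∀ᶠ x in nhds y, DifferentiableAt ℝ G x)
    (hdG1 : ∀ᶠ x in nhds y, DifferentiableAt ℝ (fderiv ℝ G) x)
    (hdG2 : DifferentiableAt ℝ (fderiv ℝ (fderiv ℝ G)) y)
    (h₁ h₂ h₃ : E) :
    (inner ℝ ψ (iteratedFDeriv ℝ 3 G y ![h₁, h₂, h₃]) : ℝ) =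
      fderiv ℝ (fun x => fderiv ℝ (fun x' =>
        fderiv ℝ (fun z => (inner ℝ ψ (G z) : ℝ)) x' h₃) x h₂) y h₁ := by
  have hIT : iteratedFDeriv ℝ 3 G y ![h₁, h₂, h₃]
      = fderiv ℝ (fderiv ℝ (fderiv ℝ G)) y h₁ h₂ h₃ := by
    rw [iteratedFDeriv_succ_apply_right, iteratedFDeriv_two_apply]
    simp [Fin.init, Fin.last, Fin.castSucc, Fin.castAdd, Fin.castLE]
  rw [hIT]
  have stepA : (inner ℝ ψ (fderiv ℝ (fderiv ℝ (fderiv ℝ G)) y h₁ h₂ h₃) : ℝ)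
      = fderiv ℝ (fun x => (inner ℝ ψ (fderiv ℝ (fderiv ℝ G) x h₂ h₃) : ℝ)) y h₁ := by
    have := (((innerSL ℝ ψ).comp ((ContinuousLinearMap.apply ℝ E h₃).comp
        (ContinuousLinearMap.apply ℝ (E →L[ℝ] E) h₂))).hasFDerivAt.comp (𝕜 := ℝ) (E := E)
        (F := E →L[ℝ] E →L[ℝ] E) (G := ℝ) y
        hdG2.hasFDerivAt).fderiv
    rw [show (fun x => (inner ℝ ψ (fderiv ℝ (fderiv ℝ G) x h₂ h₃) : ℝ)) =
        ((innerSL ℝ ψ).comp ((ContinuousLinearMap.apply ℝ E h₃).comp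
        (ContinuousLinearMap.apply ℝ (E →L[ℝ] E) h₂))) ∘ (fderiv ℝ (fderiv ℝ G)) from rfl, this]
    rfl
  rw [stepA]
  have stepB : (fun x => (inner ℝ ψ (fderiv ℝ (fderiv ℝ G) x h₂ h₃) : ℝ)) =ᶠ[nhds y]
      (fun x => fderiv ℝ (fun x' => (inner ℝ ψ (fderiv ℝ G x' h₃) : ℝ)) x h₂) := by
    filter_upwards [hdG1] with x hx
    have := (((innerSL ℝ ψ).comp (ContinuousLinearMap.apply ℝ E h₃)).hasFDerivAt.comp x
        hx.hasFDerivAt).fderiv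
    rw [show (fun x' => (inner ℝ ψ (fderiv ℝ G x' h₃) : ℝ)) =
        ((innerSL ℝ ψ).comp (ContinuousLinearMap.apply ℝ E h₃)) ∘ (fderiv ℝ G) from rfl, this]
    rfl
  rw [stepB.fderiv_eq]
  have stepC : (fun x' => (inner ℝ ψ (fderiv ℝ G x' h₃) : ℝ)) =ᶠ[nhds y]
      (fun x' => fderiv ℝ (fun z => (inner ℝ ψ (G z) : ℝ)) x' h₃) := by
    filter_upwards [hdG] with x hx
    have := ((innerSL ℝ ψ).hasFDerivAt.comp x hx.hasFDerivAt).fderiv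
    rw [show (fun z => (inner ℝ ψ (G z) : ℝ)) = (innerSL ℝ ψ) ∘ G from rfl, this]
    rfl
  have : (fun x => fderiv ℝ (fun x' => (inner ℝ ψ (fderiv ℝ G x' h₃) : ℝ)) x h₂) =ᶠ[nhds y]
      (fun x => fderiv ℝ (fun x' => fderiv ℝ (fun z => (inner ℝ ψ (G z) : ℝ)) x' h₃) x h₂) := by
    filter_upwards [stepC.fderiv (𝕜 := ℝ)] with x hx
    rw [hx]
  rw [this.fderiv_eq]

private lemma core_eval1' (V : E →L[ℝ] E) (c : ℝ) (y h₃ : E) (x : E)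
    (hx : (⟪V x, V x⟫:ℝ) ≠ 0) :
    fderiv ℝ (fun z => c * ((⟪V y, V z⟫:ℝ) * Real.sqrt (⟪V z, V z⟫:ℝ))) x h₃
      = c * ((⟪V y, V h₃⟫:ℝ) * Real.sqrt (⟪V x, V x⟫:ℝ)
          + (⟪V y, V x⟫:ℝ) * ((⟪V h₃, V x⟫:ℝ) * (Real.sqrt (⟪V x, V x⟫:ℝ))⁻¹)) := by
  have hpos : (0:ℝ) < ⟪V x, V x⟫ := lt_of_le_of_ne real_inner_self_nonneg (Ne.symm hx)
  have hr : Real.sqrt (⟪V x, V x⟫:ℝ) ≠ 0 := by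
    rw [Real.sqrt_ne_zero']; exact hpos
  have hlin : ∀ u : E, HasFDerivAt (fun z => (⟪u, V z⟫ : ℝ)) ((innerSL ℝ u).comp V) x :=
    fun u => ((innerSL ℝ u).comp V).hasFDerivAt
  have hQ : HasFDerivAt (fun z => Real.sqrt (⟪V z, V z⟫:ℝ))
      ((1 / (2 * Real.sqrt (⟪V x, V x⟫:ℝ))) • ((fderivInnerCLM ℝ (V x, V x)).comp (V.prod V))) x :=
    (HasFDerivAt.inner ℝ V.hasFDerivAt V.hasFDerivAt).sqrt hx
  have H : HasFDerivAt (fun z => c * ((⟪V y, V z⟫:ℝ) * Real.sqrt (⟪V z, V z⟫:ℝ)))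
      (c • ((⟪V y, V x⟫:ℝ) •
          ((1 / (2 * Real.sqrt (⟪V x, V x⟫:ℝ))) • ((fderivInnerCLM ℝ (V x, V x)).comp (V.prod V)))
        + Real.sqrt (⟪V x, V x⟫:ℝ) • ((innerSL ℝ (V y)).comp V))) x :=
    ((hlin (V y)).mul hQ).const_mul c
  rw [H.fderiv]
  simp only [ContinuousLinearMap.add_apply, ContinuousLinearMap.coe_smul', Pi.smul_apply,
    ContinuousLinearMap.coe_comp', Function.comp_apply, ContinuousLinearMap.prod_apply,
    fderivInnerCLM_apply, innerSL_apply_apply, smul_eq_mul]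
  rw [real_inner_comm (V x) (V h₃)]
  field_simp
  ring

private lemma core_eval2' (V : E →L[ℝ] E) (c : ℝ) (y h₂ h₃ : E) (x : E)
    (hx : (⟪V x, V x⟫:ℝ) ≠ 0) :
    fderiv ℝ (fun z => c * ((⟪V y, V h₃⟫:ℝ) * Real.sqrt (⟪V z, V z⟫:ℝ)
          + (⟪V y, V z⟫:ℝ) * ((⟪V h₃, V z⟫:ℝ) * (Real.sqrt (⟪V z, V z⟫:ℝ))⁻¹))) x h₂
      = c * ((⟪V y, V h₃⟫:ℝ) * ((⟪V h₂, V x⟫:ℝ) * (Real.sqrt (⟪V x, V x⟫:ℝ))⁻¹)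
          + ((⟪V y, V h₂⟫:ℝ) * ((⟪V h₃, V x⟫:ℝ) * (Real.sqrt (⟪V x, V x⟫:ℝ))⁻¹)
            + (⟪V y, V x⟫:ℝ) * ((⟪V h₃, V h₂⟫:ℝ) * (Real.sqrt (⟪V x, V x⟫:ℝ))⁻¹
                + (⟪V h₃, V x⟫:ℝ) * (-(⟪V x, V x⟫:ℝ)⁻¹ *
                    ((⟪V h₂, V x⟫:ℝ) * (Real.sqrt (⟪V x, V x⟫:ℝ))⁻¹))))) := by
  have hpos : (0:ℝ) < ⟪V x, V x⟫ := lt_of_le_of_ne real_inner_self_nonneg (Ne.symm hx)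
  have hr : Real.sqrt (⟪V x, V x⟫:ℝ) ≠ 0 := by
    rw [Real.sqrt_ne_zero']; exact hpos
  have hlin : ∀ u : E, HasFDerivAt (fun z => (⟪u, V z⟫ : ℝ)) ((innerSL ℝ u).comp V) x :=
    fun u => ((innerSL ℝ u).comp V).hasFDerivAt
  have hQ : HasFDerivAt (fun z => Real.sqrt (⟪V z, V z⟫:ℝ))
      ((1 / (2 * Real.sqrt (⟪V x, V x⟫:ℝ))) • ((fderivInnerCLM ℝ (V x, V x)).comp (V.prod V))) x :=
    (HasFDerivAt.inner ℝ V.hasFDerivAt V.hasFDerivAt).sqrt hx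
  have hQi : HasFDerivAt (fun z => (Real.sqrt (⟪V z, V z⟫:ℝ))⁻¹)
      ((-(Real.sqrt (⟪V x, V x⟫:ℝ) ^ 2)⁻¹) •
        ((1 / (2 * Real.sqrt (⟪V x, V x⟫:ℝ))) •
          ((fderivInnerCLM ℝ (V x, V x)).comp (V.prod V)))) x :=
    (hasDerivAt_inv hr).comp_hasFDerivAt x hQ
  have H := (((hQ.const_mul (⟪V y, V h₃⟫:ℝ)).add
      ((hlin (V y)).mul ((hlin (V h₃)).mul hQi))).const_mul c).fderiv
  simp only [Pi.add_apply, Pi.mul_apply, Pi.neg_apply] at H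
  rw [H]
  simp only [ContinuousLinearMap.add_apply, ContinuousLinearMap.coe_smul', Pi.smul_apply,
    ContinuousLinearMap.coe_comp', Function.comp_apply, ContinuousLinearMap.prod_apply,
    fderivInnerCLM_apply, innerSL_apply_apply, smul_eq_mul]
  rw [real_inner_comm (V x) (V h₂), Real.sq_sqrt (le_of_lt hpos)]
  field_simp
  ring

private lemma core_eval3' (V : E →L[ℝ] E) (c : ℝ) (y h₁ h₂ h₃ : E)
    (hy : (⟪V y, V y⟫:ℝ) ≠ 0) :
    fderiv ℝ (fun x => c * ((⟪V y, V h₃⟫:ℝ) * ((⟪V h₂, V x⟫:ℝ) * (Real.sqrt (⟪V x, V x⟫:ℝ))⁻¹)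
          + ((⟪V y, V h₂⟫:ℝ) * ((⟪V h₃, V x⟫:ℝ) * (Real.sqrt (⟪V x, V x⟫:ℝ))⁻¹)
            + (⟪V y, V x⟫:ℝ) * ((⟪V h₃, V h₂⟫:ℝ) * (Real.sqrt (⟪V x, V x⟫:ℝ))⁻¹
                + (⟪V h₃, V x⟫:ℝ) * (-(⟪V x, V x⟫:ℝ)⁻¹ *
                    ((⟪V h₂, V x⟫:ℝ) * (Real.sqrt (⟪V x, V x⟫:ℝ))⁻¹)))))) y h₁ = 0 := by
  have hpos : (0:ℝ) < ⟪V y, V y⟫ := lt_of_le_of_ne real_inner_self_nonneg (Ne.symm hy)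
  have hr0 : Real.sqrt (⟪V y, V y⟫:ℝ) ≠ 0 := by
    rw [Real.sqrt_ne_zero']; exact hpos
  have hlin : ∀ u : E, HasFDerivAt (fun z => (⟪u, V z⟫ : ℝ)) ((innerSL ℝ u).comp V) y :=
    fun u => ((innerSL ℝ u).comp V).hasFDerivAt
  have hS : HasFDerivAt (fun z => (⟪V z, V z⟫:ℝ))
      ((fderivInnerCLM ℝ (V y, V y)).comp (V.prod V)) y :=
    HasFDerivAt.inner ℝ V.hasFDerivAt V.hasFDerivAt
  have hQ : HasFDerivAt (fun z => Real.sqrt (⟪V z, V z⟫:ℝ))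
      ((1 / (2 * Real.sqrt (⟪V y, V y⟫:ℝ))) • ((fderivInnerCLM ℝ (V y, V y)).comp (V.prod V))) y :=
    hS.sqrt hy
  have hQi : HasFDerivAt (fun z => (Real.sqrt (⟪V z, V z⟫:ℝ))⁻¹)
      ((-(Real.sqrt (⟪V y, V y⟫:ℝ) ^ 2)⁻¹) •
        ((1 / (2 * Real.sqrt (⟪V y, V y⟫:ℝ))) •
          ((fderivInnerCLM ℝ (V y, V y)).comp (V.prod V)))) y :=
    (hasDerivAt_inv hr0).comp_hasFDerivAt y hQ
  have hSi : HasFDerivAt (fun z => ((⟪V z, V z⟫:ℝ))⁻¹)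
      ((-((⟪V y, V y⟫:ℝ) ^ 2)⁻¹) • ((fderivInnerCLM ℝ (V y, V y)).comp (V.prod V))) y :=
    (hasDerivAt_inv hy).comp_hasFDerivAt y hS
  have H := (((((hlin (V h₂)).mul hQi).const_mul (⟪V y, V h₃⟫:ℝ)).add
      ((((hlin (V h₃)).mul hQi).const_mul (⟪V y, V h₂⟫:ℝ)).add
        ((hlin (V y)).mul ((hQi.const_mul (⟪V h₃, V h₂⟫:ℝ)).add
          ((hlin (V h₃)).mul (hSi.neg.mul ((hlin (V h₂)).mul hQi))))))).const_mul c).fderiv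
  simp only [Pi.add_apply, Pi.mul_apply, Pi.neg_apply] at H
  rw [H]
  simp only [ContinuousLinearMap.add_apply, ContinuousLinearMap.coe_smul', Pi.smul_apply,
    ContinuousLinearMap.coe_comp', Function.comp_apply, ContinuousLinearMap.prod_apply,
    fderivInnerCLM_apply, innerSL_apply_apply, smul_eq_mul, ContinuousLinearMap.neg_apply,
    Pi.neg_apply]
  rw [real_inner_comm (V h₁) (V y), real_inner_comm (V h₂) (V y), real_inner_comm (V h₃) (V y)]
  try rw [real_inner_comm (V h₂) (V h₁)]
  try rw [real_inner_comm (V h₃) (V h₁)]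
  try rw [real_inner_comm (V h₂) (V h₃)]
  set r := Real.sqrt (⟪V y, V y⟫:ℝ) with hrdef
  have hSr : (⟪V y, V y⟫:ℝ) = r ^ 2 := (Real.sq_sqrt (le_of_lt hpos)).symm
  rw [hSr]
  field_simp
  ring

private lemma core' (V : E →L[ℝ] E) (c : ℝ) (y h₁ h₂ h₃ : E)
    (hy : (⟪V y, V y⟫:ℝ) ≠ 0) :
    fderiv ℝ (fun x => fderiv ℝ (fun x' =>
      fderiv ℝ (fun z => c * ((⟪V y, V z⟫:ℝ) * Real.sqrt (⟪V z, V z⟫:ℝ))) x' h₃) x h₂) y h₁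
      = 0 := by
  have hcont : Continuous (fun x : E => (⟪V x, V x⟫:ℝ)) := V.continuous.inner V.continuous
  have hU : {x : E | (⟪V x, V x⟫:ℝ) ≠ 0} ∈ nhds y :=
    (isOpen_ne.preimage hcont).mem_nhds hy
  have step1 : (fun x' => fderiv ℝ
        (fun z => c * ((⟪V y, V z⟫:ℝ) * Real.sqrt (⟪V z, V z⟫:ℝ))) x' h₃) =ᶠ[nhds y]
      (fun x => c * ((⟪V y, V h₃⟫:ℝ) * Real.sqrt (⟪V x, V x⟫:ℝ)
          + (⟪V y, V x⟫:ℝ) * ((⟪V h₃, V x⟫:ℝ) * (Real.sqrt (⟪V x, V x⟫:ℝ))⁻¹))) := by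
    filter_upwards [hU] with x hx using core_eval1' V c y h₃ x hx
  have step2 : (fun x => fderiv ℝ (fun x' => fderiv ℝ
        (fun z => c * ((⟪V y, V z⟫:ℝ) * Real.sqrt (⟪V z, V z⟫:ℝ))) x' h₃) x h₂) =ᶠ[nhds y]
      (fun x => c * ((⟪V y, V h₃⟫:ℝ) * ((⟪V h₂, V x⟫:ℝ) * (Real.sqrt (⟪V x, V x⟫:ℝ))⁻¹)
          + ((⟪V y, V h₂⟫:ℝ) * ((⟪V h₃, V x⟫:ℝ) * (Real.sqrt (⟪V x, V x⟫:ℝ))⁻¹)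
            + (⟪V y, V x⟫:ℝ) * ((⟪V h₃, V h₂⟫:ℝ) * (Real.sqrt (⟪V x, V x⟫:ℝ))⁻¹
                + (⟪V h₃, V x⟫:ℝ) * (-(⟪V x, V x⟫:ℝ)⁻¹ *
                    ((⟪V h₂, V x⟫:ℝ) * (Real.sqrt (⟪V x, V x⟫:ℝ))⁻¹)))))) := by
    filter_upwards [step1.fderiv (𝕜 := ℝ), hU] with x hx1 hx2
    rw [hx1]
    exact core_eval2' V c y h₂ h₃ x hx2
  rw [step2.fderiv_eq]
  exact core_eval3' V c y h₁ h₂ h₃ hy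

end Aux

/-- Algebraic core of Proposition 1: any vector of the form `p₁·b + p₂·y` annihilates the
third derivative of the Landsberg-type spray coefficient part `G(y) = c·q(y)·v(y)`;
in particular `b` and `y` do. -/
theorem stmt_4 {E : Type*} [NormedAddCommGroup E] [InnerProductSpace ℝ E]
    [FiniteDimensional ℝ E]
    (b : E) (hb : ‖b‖ = 1) (c : ℝ)
    (v : E → E) (hv : v = fun y => y - (inner ℝ b y : ℝ) • b)
    (q : E → ℝ) (hq : q = fun y => ‖v y‖)
    (G : E → E) (hG : G = fun y => (c * q y) • v y)
    (y : E) (hqy : q y ≠ 0) :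
    (∀ h₁ h₂ h₃ : E, ∀ p₁ p₂ : ℝ,
        (inner ℝ (p₁ • b + p₂ • y) (iteratedFDeriv ℝ 3 G y ![h₁, h₂, h₃]) : ℝ) = 0) ∧
    (∀ h₁ h₂ h₃ : E,
        (inner ℝ b (iteratedFDeriv ℝ 3 G y ![h₁, h₂, h₃]) : ℝ) = 0) ∧
    (∀ h₁ h₂ h₃ : E,
        (inner ℝ y (iteratedFDeriv ℝ 3 G y ![h₁, h₂, h₃]) : ℝ) = 0) := by
  set V : E →L[ℝ] E := ContinuousLinearMap.id ℝ E - (innerSL ℝ b).smulRight b with hVdef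
  have hVapp : ∀ x : E, V x = x - (⟪b, x⟫:ℝ) • b := by
    intro x
    simp [hVdef, ContinuousLinearMap.sub_apply, ContinuousLinearMap.smulRight_apply,
      innerSL_apply_apply]
  have hVv : ∀ x : E, V x = v x := by
    intro x; rw [hVapp, hv]
  have hbb : (⟪b, b⟫:ℝ) = 1 := by
    rw [real_inner_self_eq_norm_mul_norm, hb]; norm_num
  have hbV : ∀ x : E, (⟪b, V x⟫:ℝ) = 0 := by
    intro x
    rw [hVapp x, inner_sub_right, real_inner_smul_right, hbb]
    ring
  have hzV : ∀ z x : E, (⟪V z, V x⟫:ℝ) = (⟪z, V x⟫:ℝ) := by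
    intro z x
    rw [hVapp z, inner_sub_left, real_inner_smul_left, hbV]
    ring
  have hq' : ∀ x : E, q x = Real.sqrt (⟪V x, V x⟫:ℝ) := by
    intro x
    rw [real_inner_self_eq_norm_mul_norm, Real.sqrt_mul_self (norm_nonneg (V x)), hVv, hq]
  have hSy : (⟪V y, V y⟫:ℝ) ≠ 0 := by
    intro h
    apply hqy
    rw [hq' y, h, Real.sqrt_zero]
  have hcont : Continuous (fun x : E => (⟪V x, V x⟫:ℝ)) := V.continuous.inner V.continuous
  have hU : {x : E | (⟪V x, V x⟫:ℝ) ≠ 0} ∈ nhds y :=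
    (isOpen_ne.preimage hcont).mem_nhds hSy
  -- smoothness of G near y
  have hGfun : G = fun z => (c * ‖V z‖) • V z := by
    funext z
    rw [hG, hq, hVv]
  have hGC : ∀ x : E, (⟪V x, V x⟫:ℝ) ≠ 0 → ContDiffAt ℝ 3 G x := by
    intro x hx
    have hVx : V x ≠ 0 := by
      intro h
      apply hx
      rw [h, inner_zero_left]
    rw [hGfun]
    exact (contDiffAt_const.mul ((V.contDiff.contDiffAt.norm ℝ hVx))).smul
      V.contDiff.contDiffAt
  have hdG : ∀ᶠ x in nhds y, DifferentiableAt ℝ G x := by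
    filter_upwards [hU] with x hx
    exact (hGC x hx).differentiableAt (by norm_num)
  have hdG1 : ∀ᶠ x in nhds y, DifferentiableAt ℝ (fderiv ℝ G) x := by
    filter_upwards [hU] with x hx
    exact ((hGC x hx).fderiv_right (m := 2) (by norm_num)).differentiableAt (by norm_num)
  have hdG2 : DifferentiableAt ℝ (fderiv ℝ (fderiv ℝ G)) y :=
    (((hGC y hSy).fderiv_right (m := 2) (by norm_num)).fderiv_right (m := 1)
      (by norm_num)).differentiableAt (by norm_num)
  -- the two scalar functions
  have hbG : (fun z => (inner ℝ b (G z) : ℝ)) = fun _ => (0:ℝ) := by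
    funext z
    rw [hG]
    rw [inner_smul_right, ← hVv z, hbV z]
    ring
  have hyG : (fun z => (inner ℝ y (G z) : ℝ))
      = fun z => c * ((⟪V y, V z⟫:ℝ) * Real.sqrt (⟪V z, V z⟫:ℝ)) := by
    funext z
    rw [hG]
    rw [inner_smul_right, ← hVv z, hzV y z, hq' z]
    ring
  have keyb : ∀ h₁ h₂ h₃ : E,
      (inner ℝ b (iteratedFDeriv ℝ 3 G y ![h₁, h₂, h₃]) : ℝ) = 0 := by
    intro h₁ h₂ h₃
    rw [inner_iteratedFDeriv_three' G y b hdG hdG1 hdG2 h₁ h₂ h₃, hbG]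
    simp
  have keyy : ∀ h₁ h₂ h₃ : E,
      (inner ℝ y (iteratedFDeriv ℝ 3 G y ![h₁, h₂, h₃]) : ℝ) = 0 := by
    intro h₁ h₂ h₃
    rw [inner_iteratedFDeriv_three' G y y hdG hdG1 hdG2 h₁ h₂ h₃, hyG]
    exact core' V c y h₁ h₂ h₃ hSy
  refine ⟨?_, keyb, keyy⟩
  intro h₁ h₂ h₃ p₁ p₂
  rw [inner_add_left, real_inner_smul_left, real_inner_smul_left, keyb h₁ h₂ h₃,
    keyy h₁ h₂ h₃]
  ring
end

section
/- Let g be a real number with -2 < g < 2, h = sqrt(1 - g²/4), G = g/h. Define Q(w) = 1 + g·w + w², Φ(w) = π/2 + arctan(G/2) - arctan((w + g/2)/h), and V(w) = sqrt(Q(w)) · exp((G/2)·Φ(w)). Then for every real w, the first derivative of V satisfies V′(w) = w·V(w)/Q(w). -/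
open Real

/-- The generating metric function `V(w) = √Q(w)·exp((G/2)Φ(w))` satisfies
`V′(w) = w·V(w)/Q(w)`. -/
theorem stmt_9 (g : ℝ) (hg₁ : -2 < g) (hg₂ : g < 2)
    (h : ℝ) (hh : h = Real.sqrt (1 - g ^ 2 / 4)) (G : ℝ) (hG : G = g / h)
    (Q : ℝ → ℝ) (hQ : Q = fun w => 1 + g * w + w ^ 2)
    (Φ : ℝ → ℝ)
    (hΦ : Φ = fun w => π / 2 + arctan (G / 2) - arctan ((w + g / 2) / h))
    (V : ℝ → ℝ) (hV : V = fun w => Real.sqrt (Q w) * Real.exp (G / 2 * Φ w)) :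
    ∀ w : ℝ, HasDerivAt V (w * V w / Q w) w := by
  intro w
  have hg4 : (0:ℝ) < 1 - g ^ 2 / 4 := by nlinarith
  have hhpos : 0 < h := hh ▸ Real.sqrt_pos.mpr hg4
  have hh2 : h ^ 2 = 1 - g ^ 2 / 4 := by rw [hh]; exact Real.sq_sqrt hg4.le
  have hQpos : 0 < Q w := by
    rw [hQ]; show (0:ℝ) < 1 + g * w + w ^ 2; nlinarith [sq_nonneg (w + g / 2)]
  have hQd : HasDerivAt Q (g + 2 * w) w := by
    rw [hQ]
    have := (((hasDerivAt_id w).const_mul g).const_add 1).add (hasDerivAt_pow 2 w)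
    simp at this
    exact this
  have hsq : HasDerivAt (fun x => Real.sqrt (Q x)) ((g + 2 * w) / (2 * Real.sqrt (Q w))) w :=
    hQd.sqrt hQpos.ne'
  have hinner : HasDerivAt (fun x => (x + g / 2) / h) (1 / h) w := by
    have := ((hasDerivAt_id w).add_const (g / 2)).div_const h
    simpa using this
  have hden : 1 + ((w + g / 2) / h) ^ 2 = Q w / h ^ 2 := by
    rw [hQ]
    field_simp
    nlinarith [hh2]
  have hΦd : HasDerivAt Φ (-(h / Q w)) w := by
    rw [hΦ]
    have harc : HasDerivAt (fun x => arctan ((x + g / 2) / h))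
        (1 / (1 + ((w + g / 2) / h) ^ 2) * (1 / h)) w :=
      (Real.hasDerivAt_arctan _).comp w hinner
    have := harc.const_sub (π / 2 + arctan (G / 2))
    convert this using 1
    · rfl
    · rfl
    rw [hden]
    field_simp
  have hexpd : HasDerivAt (fun x => Real.exp (G / 2 * Φ x))
      (Real.exp (G / 2 * Φ w) * (G / 2 * -(h / Q w))) w :=
    ((hΦd.const_mul (G / 2)).exp)
  have hVd := hsq.mul hexpd
  rw [hV]
  convert hVd using 1
  · rfl
  · rfl
  · rfl
  have hs : Real.sqrt (Q w) > 0 := Real.sqrt_pos.mpr hQpos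
  have hs2 : Real.sqrt (Q w) ^ 2 = Q w := Real.sq_sqrt hQpos.le
  set s := Real.sqrt (Q w)
  beta_reduce
  generalize Real.exp (G / 2 * Φ w) = E
  have hGh : G * h = g := by rw [hG]; field_simp
  rw [← hs2]
  field_simp
  linear_combination (E * s) * hGh + (2 * w * E) * Real.sqrt_sq hs.le
end

section
/- Let g be a real number with -2 < g < 2, h = sqrt(1 - g²/4), G = g/h. Define Q(w) = 1 + g·w + w², Φ(w) = π/2 + arctan(G/2) - arctan((w + g/2)/h), and V(w) = sqrt(Q(w)) · exp((G/2)·Φ(w)). Then for every real w, the second derivative of V satisfies V″(w) = V(w)/Q(w)². -/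
open Real

/-- The generating metric function `V(w) = √Q(w)·exp((G/2)Φ(w))` satisfies
`V″(w) = V(w)/Q(w)²`. -/
theorem stmt_10 (g : ℝ) (hg₁ : -2 < g) (hg₂ : g < 2)
    (h : ℝ) (hh : h = Real.sqrt (1 - g ^ 2 / 4)) (G : ℝ) (hG : G = g / h)
    (Q : ℝ → ℝ) (hQ : Q = fun w => 1 + g * w + w ^ 2)
    (Φ : ℝ → ℝ)
    (hΦ : Φ = fun w => π / 2 + arctan (G / 2) - arctan ((w + g / 2) / h))
    (V : ℝ → ℝ) (hV : V = fun w => Real.sqrt (Q w) * Real.exp (G / 2 * Φ w)) :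
    ∀ w : ℝ, iteratedDeriv 2 V w = V w / Q w ^ 2 := by
  have h1 : (0:ℝ) < 1 - g ^ 2 / 4 := by nlinarith
  have hhpos : 0 < h := hh ▸ Real.sqrt_pos.2 h1
  have hhsq : h ^ 2 = 1 - g ^ 2 / 4 := by rw [hh]; exact Real.sq_sqrt h1.le
  have hQpos : ∀ x : ℝ, 0 < Q x := by
    intro x; rw [hQ]; dsimp only; nlinarith [sq_nonneg (x + g / 2)]
  have hQd : ∀ x : ℝ, HasDerivAt Q (g + 2 * x) x := by
    intro x
    rw [hQ]
    have h2 : HasDerivAt (fun w : ℝ => 1 + g * w + w ^ 2)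
        (0 + g * 1 + (2:ℕ) * x ^ (2 - 1)) x :=
      ((hasDerivAt_const x (1:ℝ)).add ((hasDerivAt_id x).const_mul g)).add
        (hasDerivAt_pow 2 x)
    convert h2 using 1
    push_cast
    ring
  have hV' : ∀ x : ℝ, HasDerivAt V (V x * x / Q x) x := by
    intro x
    have hsqrt : HasDerivAt (fun w => Real.sqrt (Q w))
        ((g + 2 * x) / (2 * Real.sqrt (Q x))) x :=
      (hQd x).sqrt (hQpos x).ne'
    have hinner : HasDerivAt (fun w : ℝ => (w + g / 2) / h) (1 / h) x := by
      have := ((hasDerivAt_id x).add_const (g / 2)).div_const h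
      simpa using this
    have harctan : HasDerivAt (fun w : ℝ => arctan ((w + g / 2) / h))
        ((1 / h) / (1 + ((x + g / 2) / h) ^ 2)) x := by
      have := hinner.arctan
      convert this using 1
      ring
    have hΦ' : HasDerivAt Φ (-((1 / h) / (1 + ((x + g / 2) / h) ^ 2))) x := by
      rw [hΦ]; exact harctan.const_sub _
    have hexp : HasDerivAt (fun w => Real.exp (G / 2 * Φ w))
        (Real.exp (G / 2 * Φ x) * (G / 2 * -((1 / h) / (1 + ((x + g / 2) / h) ^ 2)))) x :=
      (hΦ'.const_mul (G / 2)).exp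
    have hprod : HasDerivAt (fun w => Real.sqrt (Q w) * Real.exp (G / 2 * Φ w)) _ x :=
      hsqrt.mul hexp
    rw [hV]
    convert hprod using 1
    have hsx : Real.sqrt (Q x) ^ 2 = Q x := Real.sq_sqrt (hQpos x).le
    have hsxpos : 0 < Real.sqrt (Q x) := Real.sqrt_pos.2 (hQpos x)
    have hden : 1 + ((x + g / 2) / h) ^ 2 = Q x / h ^ 2 := by
      rw [hQ]
      field_simp
      nlinarith [hhsq]
    set s := Real.sqrt (Q x) with hs
    rw [hden, hG, show Q x = s ^ 2 from hsx.symm]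
    have hspos : (0:ℝ) < s := hsxpos
    field_simp
    ring
  intro w
  rw [show (2:ℕ) = 1 + 1 from rfl, iteratedDeriv_succ, iteratedDeriv_one]
  have hderivV : deriv V = fun x => V x * x / Q x := funext fun x => (hV' x).deriv
  rw [hderivV]
  have hnum : HasDerivAt (fun x => V x * x)
      (V w * w / Q w * w + V w * 1) w := (hV' w).mul (hasDerivAt_id w)
  have hdiv : HasDerivAt (fun x => V x * x / Q x)
      (((V w * w / Q w * w + V w * 1) * Q w - V w * w * (g + 2 * w)) / Q w ^ 2) w :=
    hnum.div (hQd w) (hQpos w).ne'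
  rw [hdiv.deriv]
  have hQw : Q w = 1 + g * w + w ^ 2 := by rw [hQ]
  have hQne : Q w ≠ 0 := (hQpos w).ne'
  field_simp
  linear_combination V w * Q w ^ 2 * hQw
end

section
/- Let g be a real number with -2 < g < 2, h = sqrt(1 - g²/4), G = g/h. Define Q(w) = 1 + g·w + w², Φ(w) = π/2 + arctan(G/2) - arctan((w + g/2)/h), and V(w) = sqrt(Q(w)) · exp((G/2)·Φ(w)). Then for every real w one has (1/2)·(V²)′(w) = w·V(w)²/Q(w), (1/2)·(V²)″(w) = (Q(w) - g·w)·V(w)²/Q(w)², and (1/4)·(V²)‴(w) = -g·V(w)²/Q(w)³. -/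
open Real

/-- Derivative identities `½(V²)′ = w·V²/Q`, `½(V²)″ = (Q - g·w)·V²/Q²` and
`¼(V²)‴ = -g·V²/Q³` for the generating metric function `V(w) = √Q(w)·exp((G/2)Φ(w))`. -/
theorem stmt_12 (g : ℝ) (hg₁ : -2 < g) (hg₂ : g < 2)
    (h : ℝ) (hh : h = Real.sqrt (1 - g ^ 2 / 4)) (G : ℝ) (hG : G = g / h)
    (Q : ℝ → ℝ) (hQ : Q = fun w => 1 + g * w + w ^ 2)
    (Φ : ℝ → ℝ)
    (hΦ : Φ = fun w => π / 2 + arctan (G / 2) - arctan ((w + g / 2) / h))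
    (V : ℝ → ℝ) (hV : V = fun w => Real.sqrt (Q w) * Real.exp (G / 2 * Φ w)) :
    ∀ w : ℝ,
      (1 / 2) * deriv (fun w => V w ^ 2) w = w * V w ^ 2 / Q w ∧
      (1 / 2) * iteratedDeriv 2 (fun w => V w ^ 2) w = (Q w - g * w) * V w ^ 2 / Q w ^ 2 ∧
      (1 / 4) * iteratedDeriv 3 (fun w => V w ^ 2) w = -g * V w ^ 2 / Q w ^ 3 := by
  have hpos : (0:ℝ) < 1 - g ^ 2 / 4 := by nlinarith
  have hhpos : 0 < h := hh ▸ Real.sqrt_pos.mpr hpos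
  have hh2 : h ^ 2 = 1 - g ^ 2 / 4 := by rw [hh, sq_sqrt hpos.le]
  have hQpos : ∀ w, 0 < Q w := by
    intro w; rw [hQ]; dsimp only; nlinarith [sq_nonneg (w + g / 2)]
  have hQne : ∀ w, Q w ≠ 0 := fun w => (hQpos w).ne'
  set P : ℝ → ℝ := fun w => Real.exp (G * Φ w) with hP
  have hPpos : ∀ w, 0 < P w := fun w => Real.exp_pos _
  -- V² = Q * P
  have hVP : ∀ w, V w ^ 2 = Q w * P w := by
    intro w
    rw [hV, hP]
    rw [mul_pow, sq_sqrt (hQpos w).le, ← Real.exp_nat_mul]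
    ring_nf
  have hV2 : (fun w => V w ^ 2) = fun w => Q w * P w := funext hVP
  -- derivative of Φ
  have hΦ' : ∀ w, HasDerivAt Φ (-(h / Q w)) w := by
    intro w
    have h1 : HasDerivAt (fun w : ℝ => (w + g / 2) / h) (1 / h) w := by
      simpa using ((hasDerivAt_id w).add_const (g / 2)).div_const h
    have h2 := (Real.hasDerivAt_arctan ((w + g / 2) / h)).comp w h1
    have h3 : HasDerivAt Φ (-((1 / (1 + ((w + g / 2) / h) ^ 2)) * (1 / h))) w := by
      rw [hΦ]; simpa using (h2.const_sub (π / 2 + arctan (G / 2)))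
    convert h3 using 1
    have hden : 1 + ((w + g / 2) / h) ^ 2 = Q w / h ^ 2 := by
      rw [div_pow, hh2, eq_div_iff hpos.ne', add_mul, div_mul_cancel₀ _ hpos.ne']
      simp only [hQ]
      ring
    rw [hden]
    field_simp [hhpos.ne', hQne w]
  have hGh : G * h = g := by rw [hG]; field_simp
  -- derivative of P
  have hP' : ∀ w, HasDerivAt P (-g / Q w * P w) w := by
    intro w
    have := ((hΦ' w).const_mul G).exp
    convert this using 1
    rw [hP]
    field_simp
    rw [← hGh]
  -- derivative of Q
  have hQ' : ∀ w, HasDerivAt Q (g + 2 * w) w := by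
    intro w
    rw [hQ]
    have : HasDerivAt (fun w : ℝ => 1 + g * w + w ^ 2) (0 + g * 1 + 2 * w) w := by
      exact (((hasDerivAt_const w (1:ℝ)).add ((hasDerivAt_id w).const_mul g)).add
        (hasDerivAt_pow 2 w)).congr_deriv (by ring)
    simpa using this
  -- first derivative of F = Q*P
  have hF1 : ∀ w, HasDerivAt (fun w => Q w * P w) (2 * w * P w) w := by
    intro w
    have := (hQ' w).mul (hP' w)
    refine this.congr_deriv ?_
    field_simp [hQne w]
    ring
  have hD1 : deriv (fun w => V w ^ 2) = fun w => 2 * w * P w := by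
    rw [hV2]; exact funext fun w => (hF1 w).deriv
  -- second derivative
  have hF2 : ∀ w, HasDerivAt (fun w => 2 * w * P w)
      (2 * P w + 2 * w * (-g / Q w * P w)) w := by
    intro w
    have := (((hasDerivAt_id w).const_mul (2:ℝ)).mul (hP' w))
    refine this.congr_deriv ?_
    show 2 * 1 * P w + 2 * w * (-g / Q w * P w) = _
    ring
  have hD2 : deriv (fun w => 2 * w * P w)
      = fun w => 2 * P w + 2 * w * (-g / Q w * P w) := funext fun w => (hF2 w).deriv
  -- third derivative
  have hF3 : ∀ w, HasDerivAt (fun w => 2 * P w + 2 * w * (-g / Q w * P w))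
      (-4 * g * P w / Q w ^ 2) w := by
    intro w
    have hnum : HasDerivAt (fun w => 2 * w * P w * -g) ((2 * P w + 2 * w * (-g / Q w * P w)) * -g) w :=
      (hF2 w).mul_const (-g)
    have hdiv : HasDerivAt (fun w => 2 * w * P w * -g / Q w)
        (((2 * P w + 2 * w * (-g / Q w * P w)) * -g * Q w - 2 * w * P w * -g * (g + 2 * w)) / Q w ^ 2) w :=
      hnum.div (hQ' w) (hQne w)
    have hsum := ((hP' w).const_mul (2:ℝ)).add hdiv
    have heq : (fun w => 2 * P w + 2 * w * (-g / Q w * P w))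
        = fun w => 2 * P w + 2 * w * P w * -g / Q w := by
      funext w; field_simp
    rw [heq]
    refine hsum.congr_deriv ?_
    field_simp [hQne w]
    simp only [hQ]
    ring
  intro w
  refine ⟨?_, ?_, ?_⟩
  · rw [hD1, hVP]
    field_simp [hQne w]
  · rw [iteratedDeriv_succ, iteratedDeriv_one, hD1, hD2, hVP]
    field_simp [hQne w]
    ring
  · rw [iteratedDeriv_succ, iteratedDeriv_succ,
      iteratedDeriv_one, hD1, hD2, (hF3 w).deriv, hVP]
    field_simp [hQne w]
end

section
/- Let g be a real number with -2 < g < 2, h = sqrt(1 - g²/4), G = g/h. For s ∈ (0,1) define Φ(s) = π/2 + arctan(G/2) - arctan((sqrt(1-s²) + (g/2)s)/(h·s)) and φ(s) = sqrt(1 + g·s·sqrt(1-s²))·exp((G/2)Φ(s)). Then for every s ∈ (0,1) the derivative of φ satisfies φ′(s) = g·sqrt(1-s²)·exp((G/2)Φ(s)) / sqrt(1 + g·s·sqrt(1-s²)). -/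
open Real

set_option maxHeartbeats 1000000 in
/-- On `0 < s < 1`, the generating metric function `φ(s)` satisfies
`φ′(s) = g·√(1-s²)·exp((G/2)Φ(s)) / √(1 + g·s·√(1-s²))`. -/
theorem stmt_14 (g : ℝ) (hg₁ : -2 < g) (hg₂ : g < 2)
    (h : ℝ) (hh : h = Real.sqrt (1 - g ^ 2 / 4)) (G : ℝ) (hG : G = g / h)
    (Φ : ℝ → ℝ)
    (hΦ : Φ = fun s => π / 2 + arctan (G / 2)
      - arctan ((Real.sqrt (1 - s ^ 2) + g / 2 * s) / (h * s)))
    (φ : ℝ → ℝ)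
    (hφ : φ = fun s =>
      Real.sqrt (1 + g * s * Real.sqrt (1 - s ^ 2)) * Real.exp (G / 2 * Φ s)) :
    ∀ s ∈ Set.Ioo (0 : ℝ) 1,
      HasDerivAt φ
        (g * Real.sqrt (1 - s ^ 2) * Real.exp (G / 2 * Φ s)
          / Real.sqrt (1 + g * s * Real.sqrt (1 - s ^ 2))) s := by
  intro s hs
  obtain ⟨hs0, hs1⟩ := hs
  have hs2 : (0:ℝ) < 1 - s ^ 2 := by nlinarith
  have hg4 : (0:ℝ) < 1 - g ^ 2 / 4 := by nlinarith
  have hhpos : 0 < h := hh ▸ Real.sqrt_pos.mpr hg4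
  have hh2 : h ^ 2 = 1 - g ^ 2 / 4 := by rw [hh]; exact Real.sq_sqrt hg4.le
  set c := Real.sqrt (1 - s ^ 2) with hc_def
  have hcpos : 0 < c := Real.sqrt_pos.mpr hs2
  have hc2 : c ^ 2 = 1 - s ^ 2 := Real.sq_sqrt hs2.le
  have hscpos : 0 < s * c := mul_pos hs0 hcpos
  have hsc : s * c ≤ 1 / 2 := by
    nlinarith [sq_nonneg (s * c), sq_nonneg (c ^ 2 - s ^ 2)]
  have hApos : (0:ℝ) < 1 + g * s * c := by
    nlinarith [mul_pos (show (0:ℝ) < g + 2 by linarith) hscpos]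
  set A : ℝ := 1 + g * s * c with hA_def
  have hAne : A ≠ 0 := ne_of_gt hApos
  have hsAp : 0 < Real.sqrt A := Real.sqrt_pos.mpr hApos
  have hsA2 : Real.sqrt A ^ 2 = A := Real.sq_sqrt hApos.le
  have hDne : h * s ≠ 0 := (mul_pos hhpos hs0).ne'
  -- derivative of 1 - x^2
  have d1 : HasDerivAt (fun x : ℝ => 1 - x ^ 2) (-(2 * s)) s := by
    simpa using ((hasDerivAt_pow 2 s).const_sub 1)
  -- derivative of c(x) = sqrt(1-x^2)
  have dc : HasDerivAt (fun x : ℝ => Real.sqrt (1 - x ^ 2)) (-(2 * s) / (2 * c)) s :=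
    d1.sqrt hs2.ne'
  -- derivative of numerator N = sqrt(1-x^2) + (g/2)x
  have dN : HasDerivAt (fun x : ℝ => Real.sqrt (1 - x ^ 2) + g / 2 * x)
      (-(2 * s) / (2 * c) + g / 2) s := by
    have := dc.add ((hasDerivAt_id s).const_mul (g / 2))
    simp only [id_eq, mul_one] at this
    exact this
  -- derivative of denominator D = h x
  have dD : HasDerivAt (fun x : ℝ => h * x) h s := by
    simpa using (hasDerivAt_id s).const_mul h
  -- derivative of u = N / D
  have dU : HasDerivAt (fun x : ℝ => (Real.sqrt (1 - x ^ 2) + g / 2 * x) / (h * x))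
      (((-(2 * s) / (2 * c) + g / 2) * (h * s) - (c + g / 2 * s) * h) / (h * s) ^ 2) s := by
    exact dN.div dD hDne
  -- derivative of Φ
  have dΦ : HasDerivAt Φ
      (-(1 / (1 + ((c + g / 2 * s) / (h * s)) ^ 2) *
        ((((-(2 * s) / (2 * c) + g / 2) * (h * s) - (c + g / 2 * s) * h) / (h * s) ^ 2)))) s := by
    rw [hΦ]
    exact (dU.arctan).const_sub (π / 2 + arctan (G / 2))
  -- simplify Φ'
  have hu2 : 1 + ((c + g / 2 * s) / (h * s)) ^ 2 = A / (h ^ 2 * s ^ 2) := by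
    field_simp
    linear_combination (4 * s ^ 2) * hh2 + 4 * hc2 - 4 * hA_def
  have e1 : (-(2 * s) / (2 * c) + g / 2) * (h * s) - (c + g / 2 * s) * h = -(h / c) := by
    field_simp
    linear_combination (-(2:ℝ)) * hc2
  have hΦ' : -(1 / (1 + ((c + g / 2 * s) / (h * s)) ^ 2) *
        ((((-(2 * s) / (2 * c) + g / 2) * (h * s) - (c + g / 2 * s) * h) / (h * s) ^ 2)))
      = h / (c * A) := by
    rw [e1, hu2]
    field_simp
  rw [hΦ'] at dΦ
  -- derivative of E = exp(G/2 * Φ)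
  have dE : HasDerivAt (fun x : ℝ => Real.exp (G / 2 * Φ x))
      (Real.exp (G / 2 * Φ s) * (G / 2 * (h / (c * A)))) s :=
    (dΦ.const_mul (G / 2)).exp
  -- derivative of A(x) = 1 + g x sqrt(1-x^2)
  have dA : HasDerivAt (fun x : ℝ => 1 + g * x * Real.sqrt (1 - x ^ 2))
      (g * (1 * c + s * (-(2 * s) / (2 * c)))) s := by
    have := (((hasDerivAt_id s).mul dc).const_mul g).const_add 1
    simpa [mul_assoc] using this
  -- derivative of sqrt A
  have dSA : HasDerivAt (fun x : ℝ => Real.sqrt (1 + g * x * Real.sqrt (1 - x ^ 2)))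
      (g * (1 * c + s * (-(2 * s) / (2 * c))) / (2 * Real.sqrt A)) s :=
    dA.sqrt hAne
  have dφ := dSA.mul dE
  rw [hφ]
  refine dφ.congr_deriv ?_
  symm
  rw [hG]
  have key : g * (1 * c + s * (-(2 * s) / (2 * c))) / (2 * Real.sqrt A)
      + Real.sqrt A * (g / h / 2 * (h / (c * A))) = g * c / Real.sqrt A := by
    field_simp
    linear_combination g * hsA2
      - (g * A) * hc2
  rw [← hc_def, ← hA_def]
  field_simp
  linear_combination
    (-g) * hsA2
    + (g * A) * hc2
end

section
/- Let g be a real number with -2 < g < 2, h = sqrt(1 - g²/4), G = g/h. For s ∈ (0,1) define Φ(s) = π/2 + arctan(G/2) - arctan((sqrt(1-s²) + (g/2)s)/(h·s)) and φ(s) = sqrt(1 + g·s·sqrt(1-s²))·exp((G/2)Φ(s)). Then for every s ∈ (0,1) one has the identity φ(s)·(φ(s) - s·φ′(s)) = exp(G·Φ(s)). -/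
open Real

/-- On `0 < s < 1`, the generating metric function `φ(s)` satisfies the identity
`φ·(φ - s·φ′) = exp(G·Φ)`. -/
theorem stmt_15 (g : ℝ) (hg₁ : -2 < g) (hg₂ : g < 2)
    (h : ℝ) (hh : h = Real.sqrt (1 - g ^ 2 / 4)) (G : ℝ) (hG : G = g / h)
    (Φ : ℝ → ℝ)
    (hΦ : Φ = fun s => π / 2 + arctan (G / 2)
      - arctan ((Real.sqrt (1 - s ^ 2) + g / 2 * s) / (h * s)))
    (φ : ℝ → ℝ)
    (hφ : φ = fun s =>
      Real.sqrt (1 + g * s * Real.sqrt (1 - s ^ 2)) * Real.exp (G / 2 * Φ s)) :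
    ∀ s ∈ Set.Ioo (0 : ℝ) 1,
      φ s * (φ s - s * deriv φ s) = Real.exp (G * Φ s) := by
  have hg4 : 0 < 1 - g ^ 2 / 4 := by nlinarith
  have hhpos : 0 < h := by rw [hh]; exact Real.sqrt_pos.mpr hg4
  have hhsq : h ^ 2 = 1 - g ^ 2 / 4 := by rw [hh]; exact Real.sq_sqrt hg4.le
  rintro s ⟨hs0, hs1⟩
  have hs2 : 0 < 1 - s ^ 2 := by nlinarith
  set r : ℝ := Real.sqrt (1 - s ^ 2) with hrdef
  have hrpos : 0 < r := Real.sqrt_pos.mpr hs2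
  have hrsq : r ^ 2 = 1 - s ^ 2 := Real.sq_sqrt hs2.le
  have hBpos : 0 < 1 + g * s * r := by
    nlinarith [mul_pos (mul_pos (show (0:ℝ) < g + 2 by linarith) hs0) hrpos,
      sq_nonneg (s - r)]
  -- derivative of sqrt(1 - x^2)
  have hr' : HasDerivAt (fun x : ℝ => Real.sqrt (1 - x ^ 2)) (-s / r) s := by
    have h1 : HasDerivAt (fun x : ℝ => 1 - x ^ 2) (-(2 * s)) s := by
      simpa using (hasDerivAt_pow 2 s).const_sub 1
    have h2 := (Real.hasDerivAt_sqrt (ne_of_gt hs2)).comp s h1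
    refine h2.congr_deriv ?_
    rw [← hrdef]
    field_simp
  -- derivative of u
  have hnum : HasDerivAt (fun x : ℝ => Real.sqrt (1 - x ^ 2) + g / 2 * x)
      (-s / r + g / 2) s := by
    exact hr'.add (by simpa using (hasDerivAt_id s).const_mul (g / 2))
  have hden : HasDerivAt (fun x : ℝ => h * x) h s := by
    simpa using (hasDerivAt_id s).const_mul h
  have hden_ne : h * s ≠ 0 := by positivity
  have hu : HasDerivAt (fun x : ℝ => (Real.sqrt (1 - x ^ 2) + g / 2 * x) / (h * x))
      (-1 / (r * h * s ^ 2)) s := by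
    have h3 := hnum.div hden hden_ne
    refine h3.congr_deriv ?_
    rw [← hrdef]
    field_simp
    linear_combination (-2) * hrsq
  -- derivative of Φ
  have hΦ' : HasDerivAt Φ (h / (r * (1 + g * s * r))) s := by
    rw [hΦ]
    have h4 := (hu.arctan).const_sub (π / 2 + arctan (G / 2))
    have h5 : (Real.sqrt (1 - s ^ 2) + g / 2 * s) / (h * s) = (r + g / 2 * s) / (h * s) := by
      rw [← hrdef]
    have key : 1 + ((r + g / 2 * s) / (h * s)) ^ 2 = (1 + g * s * r) / (h ^ 2 * s ^ 2) := by
      field_simp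
      linear_combination (4*s^2) * hhsq + 4 * hrsq
    refine h4.congr_deriv ?_
    rw [← hrdef, h5, key]
    field_simp
  -- derivative of B
  have hB' : HasDerivAt (fun x : ℝ => 1 + g * x * Real.sqrt (1 - x ^ 2))
      (g * (1 - 2 * s ^ 2) / r) s := by
    have h6 : HasDerivAt (fun x : ℝ => g * x) g s := by
      simpa using (hasDerivAt_id s).const_mul g
    have h7 := (h6.mul hr').const_add 1
    refine h7.congr_deriv ?_
    rw [← hrdef]
    field_simp
    linear_combination g * hrsq
  have hBne : 1 + g * s * r ≠ 0 := ne_of_gt hBpos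
  have hsB : HasDerivAt (fun x : ℝ => Real.sqrt (1 + g * x * Real.sqrt (1 - x ^ 2)))
      (1 / (2 * Real.sqrt (1 + g * s * r)) * (g * (1 - 2 * s ^ 2) / r)) s := by
    have := (Real.hasDerivAt_sqrt hBne).comp s hB'
    exact this
  have hE : HasDerivAt (fun x : ℝ => Real.exp (G / 2 * Φ x))
      (Real.exp (G / 2 * Φ s) * (G / 2 * (h / (r * (1 + g * s * r))))) s :=
    (hΦ'.const_mul (G / 2)).exp
  have hd : HasDerivAt φ
      (1 / (2 * Real.sqrt (1 + g * s * r)) * (g * (1 - 2 * s ^ 2) / r) *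
        Real.exp (G / 2 * Φ s) +
       Real.sqrt (1 + g * s * r) *
        (Real.exp (G / 2 * Φ s) * (G / 2 * (h / (r * (1 + g * s * r)))))) s := by
    rw [hφ]
    exact hsB.mul hE
  rw [hd.deriv]
  have hφs : φ s = Real.sqrt (1 + g * s * r) * Real.exp (G / 2 * Φ s) := by
    rw [hφ]
  set q : ℝ := Real.sqrt (1 + g * s * r) with hqdef
  have hqpos : 0 < q := Real.sqrt_pos.mpr hBpos
  have hqsq : q ^ 2 = 1 + g * s * r := Real.sq_sqrt hBpos.le
  set E : ℝ := Real.exp (G / 2 * Φ s) with hEdef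
  have hE2 : Real.exp (G * Φ s) = E * E := by
    rw [hEdef, ← Real.exp_add]; ring_nf
  rw [hφs, hE2, hG]
  field_simp
  have hq1 : q ^ 2 / (1 + s * g * r) = 1 := by
    rw [hqsq, div_eq_one_iff_eq (ne_of_gt (by linarith))]; ring
  rw [hq1]
  linear_combination (2*E^2*s*g) * hrsq + (2*E^2*r) * hqsq
end

section
/- Let g be a real number with -2 < g < 2, h = sqrt(1 - g²/4), G = g/h. For s ∈ (0,1) define Φ(s) = π/2 + arctan(G/2) - arctan((sqrt(1-s²) + (g/2)s)/(h·s)) and φ(s) = sqrt(1 + g·s·sqrt(1-s²))·exp((G/2)Φ(s)). Then for every s ∈ (0,1) one has the identity (φ(s) - s·φ′(s))² = φ(s)·( φ(s) - s·φ′(s) + (1 - s²)·φ″(s) ). -/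
open Real

/-- On `0 < s < 1`, the generating metric function `φ(s)` satisfies the identity
`(φ - s·φ′)² = φ·(φ - s·φ′ + (1 - s²)·φ″)`. -/
theorem stmt_16 (g : ℝ) (hg₁ : -2 < g) (hg₂ : g < 2)
    (h : ℝ) (hh : h = Real.sqrt (1 - g ^ 2 / 4)) (G : ℝ) (hG : G = g / h)
    (Φ : ℝ → ℝ)
    (hΦ : Φ = fun s => π / 2 + arctan (G / 2)
      - arctan ((Real.sqrt (1 - s ^ 2) + g / 2 * s) / (h * s)))
    (φ : ℝ → ℝ)
    (hφ : φ = fun s =>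
      Real.sqrt (1 + g * s * Real.sqrt (1 - s ^ 2)) * Real.exp (G / 2 * Φ s)) :
    ∀ s ∈ Set.Ioo (0 : ℝ) 1,
      (φ s - s * deriv φ s) ^ 2
        = φ s * (φ s - s * deriv φ s + (1 - s ^ 2) * iteratedDeriv 2 φ s) := by
  have hg4 : (0:ℝ) < 1 - g ^ 2 / 4 := by nlinarith
  have hh0 : 0 < h := by rw [hh]; exact Real.sqrt_pos.2 hg4
  have hh2 : h ^ 2 = 1 - g ^ 2 / 4 := by rw [hh]; exact Real.sq_sqrt hg4.le
  -- the key derivative formula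
  have key : ∀ t ∈ Set.Ioo (0:ℝ) 1, HasDerivAt φ
      (φ t * (g * Real.sqrt (1 - t ^ 2) / (1 + g * t * Real.sqrt (1 - t ^ 2)))) t := by
    intro t ht
    obtain ⟨ht0, ht1⟩ := ht
    have h1t : (0:ℝ) < 1 - t ^ 2 := by nlinarith
    set r := Real.sqrt (1 - t ^ 2) with hrdef
    have hr0 : 0 < r := Real.sqrt_pos.2 h1t
    have hr2 : r ^ 2 = 1 - t ^ 2 := Real.sq_sqrt h1t.le
    have hB0 : 0 < 1 + g * t * r := by
      nlinarith [mul_pos (by linarith : (0:ℝ) < 2 + g) (mul_pos ht0 hr0),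
        sq_nonneg (t - r)]
    have hsb0 : 0 < Real.sqrt (1 + g * t * r) := Real.sqrt_pos.2 hB0
    have hsb2 : Real.sqrt (1 + g * t * r) ^ 2 = 1 + g * t * r := Real.sq_sqrt hB0.le
    -- derivative of r(x) = sqrt (1 - x²)
    have hR : HasDerivAt (fun x : ℝ => Real.sqrt (1 - x ^ 2)) (-t / r) t := by
      have h1 : HasDerivAt (fun x : ℝ => 1 - x ^ 2) (-(2 * t)) t := by
        simpa using (hasDerivAt_pow 2 t).const_sub 1
      have := h1.sqrt h1t.ne'
      convert this using 1
      rw [← hrdef]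
      field_simp
    -- derivative of the arctan argument
    have hU : HasDerivAt (fun x : ℝ =>
        (Real.sqrt (1 - x ^ 2) + g / 2 * x) / (h * x)) (-(1 / (r * h * t ^ 2))) t := by
      have hnum : HasDerivAt (fun x : ℝ => Real.sqrt (1 - x ^ 2) + g / 2 * x)
          (-t / r + g / 2) t := hR.add (by simpa using (hasDerivAt_id t).const_mul (g / 2))
      have hden : HasDerivAt (fun x : ℝ => h * x) h t := by
        simpa using (hasDerivAt_id t).const_mul h
      have hne : h * t ≠ 0 := by positivity
      have := hnum.div hden hne
      refine this.congr_deriv ?_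
      rw [← hrdef]
      field_simp
      linear_combination (-2) * hr2
    -- derivative of Φ
    have hΦ' : HasDerivAt Φ (h / (r * (1 + g * t * r))) t := by
      rw [hΦ]
      have := (hU.arctan).const_sub (π / 2 + arctan (G / 2))
      refine this.congr_deriv ?_
      have huval : 1 + ((Real.sqrt (1 - t ^ 2) + g / 2 * t) / (h * t)) ^ 2
          = (1 + g * t * r) / (h ^ 2 * t ^ 2) := by
        rw [← hrdef]
        field_simp
        linear_combination 4 * hr2 + (4 * t ^ 2) * hh2
      rw [huval]
      field_simp
    -- derivative of B(x) = 1 + g x r(x)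
    have hBd : HasDerivAt (fun x : ℝ => 1 + g * x * Real.sqrt (1 - x ^ 2))
        (g * (1 - 2 * t ^ 2) / r) t := by
      have := (((hasDerivAt_id t).const_mul g).mul hR).const_add 1
      refine this.congr_deriv ?_
      rw [← hrdef]
      field_simp
      simp only [id_eq]
      linear_combination g * hr2
    -- derivative of sqrt B
    have hsq : HasDerivAt (fun x : ℝ => Real.sqrt (1 + g * x * Real.sqrt (1 - x ^ 2)))
        ((g * (1 - 2 * t ^ 2) / r) / (2 * Real.sqrt (1 + g * t * r))) t := by
      have := hBd.sqrt (by rw [← hrdef]; exact hB0.ne')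
      exact this
    -- derivative of the exponential factor
    have hexp : HasDerivAt (fun x : ℝ => Real.exp (G / 2 * Φ x))
        (Real.exp (G / 2 * Φ t) * (G / 2 * (h / (r * (1 + g * t * r))))) t :=
      ((hΦ'.const_mul (G / 2)).exp)
    rw [hφ]
    have := hsq.mul hexp
    refine this.congr_deriv ?_
    beta_reduce
    rw [← hrdef, hG]
    have hsb2' := hsb2
    have hsb0' := hsb0.ne'
    generalize hsbE : Real.sqrt (1 + g * t * r) = sb at hsb2' hsb0' ⊢
    generalize hEE : Real.exp (g / h / 2 * Φ t) = E
    field_simp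
    linear_combination (g * E * (1 - 2 * r ^ 2)) * hsb2'
      + (-2 * g * E * (1 + g * t * r)) * hr2
  -- now the main computation
  intro s hs
  obtain ⟨hs0, hs1⟩ := hs
  have h1s : (0:ℝ) < 1 - s ^ 2 := by nlinarith
  set r := Real.sqrt (1 - s ^ 2) with hrdef
  have hr0 : 0 < r := Real.sqrt_pos.2 h1s
  have hr2 : r ^ 2 = 1 - s ^ 2 := Real.sq_sqrt h1s.le
  have hB0 : 0 < 1 + g * s * r := by
    nlinarith [mul_pos (by linarith : (0:ℝ) < 2 + g) (mul_pos hs0 hr0),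
      sq_nonneg (s - r)]
  set L : ℝ → ℝ := fun x => g * Real.sqrt (1 - x ^ 2) / (1 + g * x * Real.sqrt (1 - x ^ 2))
    with hLdef
  have hderiv_eq : ∀ t ∈ Set.Ioo (0:ℝ) 1, deriv φ t = φ t * L t := fun t ht =>
    (key t ht).deriv
  -- second derivative
  have hR : HasDerivAt (fun x : ℝ => Real.sqrt (1 - x ^ 2)) (-s / r) s := by
    have h1 : HasDerivAt (fun x : ℝ => 1 - x ^ 2) (-(2 * s)) s := by
      simpa using (hasDerivAt_pow 2 s).const_sub 1
    have := h1.sqrt h1s.ne'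
    convert this using 1
    rw [← hrdef]
    field_simp
  have hBd : HasDerivAt (fun x : ℝ => 1 + g * x * Real.sqrt (1 - x ^ 2))
      (g * (1 - 2 * s ^ 2) / r) s := by
    have := (((hasDerivAt_id s).const_mul g).mul hR).const_add 1
    refine this.congr_deriv ?_
    rw [← hrdef]
    field_simp
    simp only [id_eq]
    linear_combination g * hr2
  have hLd : HasDerivAt L
      ((g * (-s / r) * (1 + g * s * r) - g * r * (g * (1 - 2 * s ^ 2) / r))
        / (1 + g * s * r) ^ 2) s := by
    rw [hLdef]
    have hnum : HasDerivAt (fun x : ℝ => g * Real.sqrt (1 - x ^ 2)) (g * (-s / r)) s :=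
      hR.const_mul g
    have := hnum.div hBd (by rw [← hrdef]; exact hB0.ne')
    exact this
  have hψ : HasDerivAt (fun x => φ x * L x)
      (φ s * L s * L s + φ s *
        ((g * (-s / r) * (1 + g * s * r) - g * r * (g * (1 - 2 * s ^ 2) / r))
          / (1 + g * s * r) ^ 2)) s := (key s ⟨hs0, hs1⟩).mul hLd
  have hdd : iteratedDeriv 2 φ s = φ s * L s * L s + φ s *
      ((g * (-s / r) * (1 + g * s * r) - g * r * (g * (1 - 2 * s ^ 2) / r))
        / (1 + g * s * r) ^ 2) := by
    rw [iteratedDeriv_succ, iteratedDeriv_one]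
    rw [Filter.EventuallyEq.deriv_eq (f := fun x => φ x * L x) ?_]
    · exact hψ.deriv
    · filter_upwards [Ioo_mem_nhds hs0 hs1] with t ht using hderiv_eq t ht
  rw [hderiv_eq s ⟨hs0, hs1⟩, hdd]
  have hLs : L s = g * r / (1 + g * s * r) := rfl
  rw [hLs]
  have hbr : (1 - s * (g * r / (1 + g * s * r))) ^ 2
      = 1 - s * (g * r / (1 + g * s * r))
        + (1 - s ^ 2) * ((g * r / (1 + g * s * r)) * (g * r / (1 + g * s * r))
          + ((g * (-s / r) * (1 + g * s * r) - g * r * (g * (1 - 2 * s ^ 2) / r))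
            / (1 + g * s * r) ^ 2)) := by
    have hB1 : 1 + s * g * r ≠ 0 := by nlinarith
    field_simp
    linear_combination (-(s * g + g ^ 2 * r * (1 - s ^ 2))) * hr2
  linear_combination (φ s) ^ 2 * hbr
end

section
/- Let E be a finite-dimensional real inner product space, b ∈ E a unit vector, and g a real number with -2 < g < 2; set h = sqrt(1 - g²/4), G = g/h. For y ∈ E write β(y) = ⟨b,y⟩, v(y) = y - β(y)b, q(y) = ‖v(y)‖, B(y) = β(y)² + g·q(y)·β(y) + q(y)², and on the open set U = { y : β(y) > 0 and q(y) > 0 } define K(y) = sqrt(B(y)) · exp( (G/2)·( π/2 + arctan(G/2) - arctan((q(y) + (g/2)β(y))/(h·β(y))) ) ). Then at every y ∈ U the function (1/2)K² is differentiable and its gradient equals (K(y)²/B(y)) · ( y + g·q(y)·b ). -/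
set_option maxHeartbeats 1000000

open Real

/-- For the Finsleroid–Finsler metric function `K` with constant Finsleroid charge `g`,
at every `y` with `β(y) = ⟨b,y⟩ > 0` and `q(y) = ‖y - β(y)b‖ > 0`, the function `½K²`
is differentiable with gradient `(K²/B)·(y + g·q·b)`, where `B = β² + gqβ + q²`. -/
theorem stmt_18 {E : Type*} [NormedAddCommGroup E] [InnerProductSpace ℝ E]
    [FiniteDimensional ℝ E]
    (b : E) (hb : ‖b‖ = 1) (g : ℝ) (hg₁ : -2 < g) (hg₂ : g < 2)
    (h : ℝ) (hh : h = Real.sqrt (1 - g ^ 2 / 4)) (G : ℝ) (hG : G = g / h)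
    (β : E → ℝ) (hβ : β = fun y => (inner ℝ b y : ℝ))
    (v : E → E) (hv : v = fun y => y - β y • b)
    (q : E → ℝ) (hq : q = fun y => ‖v y‖)
    (B : E → ℝ) (hB : B = fun y => β y ^ 2 + g * q y * β y + q y ^ 2)
    (K : E → ℝ)
    (hK : K = fun y =>
      Real.sqrt (B y) *
        Real.exp (G / 2 *
          (π / 2 + arctan (G / 2) - arctan ((q y + g / 2 * β y) / (h * β y)))))
    (y : E) (hβy : 0 < β y) (hqy : 0 < q y) :
    HasGradientAt (fun z => (1 / 2) * K z ^ 2)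
      ((K y ^ 2 / B y) • (y + (g * q y) • b)) y := by
  have hb2 : (inner ℝ b b : ℝ) = 1 := by
    rw [real_inner_self_eq_norm_sq, hb]; norm_num
  have hg4 : (0:ℝ) < 1 - g ^ 2 / 4 := by nlinarith
  have hhpos : 0 < h := by rw [hh]; exact Real.sqrt_pos.mpr hg4
  have hhsq : h ^ 2 = 1 - g ^ 2 / 4 := by rw [hh]; exact Real.sq_sqrt hg4.le
  have hqnn : ∀ z, 0 ≤ q z := by intro z; rw [hq]; exact norm_nonneg _
  have hBnn : ∀ z, 0 ≤ B z := by
    intro z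
    have h1 := sq_nonneg (β z + q z)
    have h2 := sq_nonneg (β z - q z)
    rw [hB]
    dsimp only
    nlinarith [mul_nonneg (by linarith : (0:ℝ) ≤ 2 + g) h1,
      mul_nonneg (by linarith : (0:ℝ) ≤ 2 - g) h2]
  have hBy : 0 < B y := by
    rw [hB]; dsimp only
    nlinarith [mul_pos (show (0:ℝ) < 2 + g by linarith) (show (0:ℝ) < (β y + q y) ^ 2 by positivity),
      mul_nonneg (show (0:ℝ) ≤ 2 - g by linarith) (sq_nonneg (β y - q y))]
  have hβ' : HasFDerivAt β (innerSL ℝ b) y := by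
    rw [hβ]; exact (innerSL ℝ b).hasFDerivAt
  -- derivative of q
  have hq' : HasFDerivAt q ((q y)⁻¹ • innerSL ℝ (v y)) y := by
    have hw' : HasFDerivAt (fun z => z - β z • b)
        (ContinuousLinearMap.id ℝ E - (innerSL ℝ b).smulRight b) y :=
      (hasFDerivAt_id y).sub (hβ'.smul_const b)
    have hq2' := hw'.norm_sq
    have hqfun : q = fun z => Real.sqrt (‖z - β z • b‖ ^ 2) := by
      funext z; rw [hq, hv, Real.sqrt_sq (norm_nonneg _)]
    have hvy : v y = y - β y • b := by rw [hv]
    have hnq : ‖v y‖ = q y := by rw [hq]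
    have hvb : (inner ℝ (v y) b : ℝ) = 0 := by
      rw [hv, inner_sub_left, real_inner_smul_left, hb2, hβ, real_inner_comm]; ring
    have hne : ‖y - β y • b‖ ^ 2 ≠ 0 := by rw [← hvy, hnq]; positivity
    rw [hqfun]
    refine (hq2'.sqrt hne).congr_fderiv ?_
    ext ξ
    simp only [ContinuousLinearMap.coe_smul', Pi.smul_apply, ContinuousLinearMap.smul_apply,
      ContinuousLinearMap.comp_apply, ContinuousLinearMap.sub_apply, ContinuousLinearMap.id_apply,
      ContinuousLinearMap.smulRight_apply, innerSL_apply_apply, smul_eq_mul]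
    rw [← hvy, inner_sub_right, real_inner_smul_right, Real.sqrt_sq (norm_nonneg _), hvb, hnq]
    field_simp; ring
  -- derivative of B
  have hBfun : B = fun z => β z * β z + g * (q z * β z) + q z * q z := by
    rw [hB]; funext z; ring
  have hB' : HasFDerivAt B
      (((β y • innerSL ℝ b + β y • innerSL ℝ b) + g • (q y • innerSL ℝ b + β y • ((q y)⁻¹ • innerSL ℝ (v y)))) +
        (q y • ((q y)⁻¹ • innerSL ℝ (v y)) + q y • ((q y)⁻¹ • innerSL ℝ (v y)))) y := by
    rw [hBfun]
    exact ((hβ'.mul hβ').add ((hq'.mul hβ').const_mul g)).add (hq'.mul hq')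
  -- denominator nonzero
  have hdne : h * β y ≠ 0 := by positivity
  -- derivative of u (as mul-inv form)
  have hinv' : HasFDerivAt (fun z => (h * β z)⁻¹)
      ((-((h * β y) ^ 2)⁻¹) • (h • innerSL ℝ b)) y :=
    (hasDerivAt_inv hdne).comp_hasFDerivAt y (hβ'.const_mul h)
  have hN' : HasFDerivAt (fun z => q z + g / 2 * β z)
      ((q y)⁻¹ • innerSL ℝ (v y) + (g / 2) • innerSL ℝ b) y :=
    hq'.add (hβ'.const_mul (g / 2))
  have hu' := hN'.mul hinv'
  have hA' := hu'.arctan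
  have hCA' := hA'.const_sub (π / 2 + arctan (G / 2))
  have hexp' := (hCA'.const_mul G).exp
  have hF' := (hB'.mul hexp').const_mul (1/2 : ℝ)
  have hfun : (fun z => (1 / 2 : ℝ) * K z ^ 2) = (fun z =>
      (1 / 2 : ℝ) * (B z * Real.exp (G * (π / 2 + arctan (G / 2) -
        arctan ((q z + g / 2 * β z) * (h * β z)⁻¹))))) := by
    funext z
    rw [hK]
    dsimp only
    rw [mul_pow, Real.sq_sqrt (hBnn z), pow_two, ← Real.exp_add, div_eq_mul_inv]
    ring_nf
  have hK2 : K y ^ 2 = B y * Real.exp (G * (π / 2 + arctan (G / 2) -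
      arctan ((q y + g / 2 * β y) * (h * β y)⁻¹))) := by
    have := congrFun hfun y
    linarith
  have hBid : h ^ 2 * β y ^ 2 + (q y + g / 2 * β y) ^ 2 = B y := by
    rw [hB, hhsq]; dsimp only; ring
  have hone : 1 + ((q y + g / 2 * β y) * (h * β y)⁻¹) ^ 2 = B y / (h ^ 2 * β y ^ 2) := by
    rw [← hBid]
    field_simp
  have hyinner : ∀ ξ : E, (inner ℝ y ξ : ℝ) = inner ℝ (v y) ξ + β y * inner ℝ b ξ := by
    intro ξ
    rw [hv]
    dsimp only
    rw [inner_sub_left, real_inner_smul_left]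
    ring
  rw [hasGradientAt_iff_hasFDerivAt, hfun]
  refine hF'.congr_fderiv ?_
  ext ξ
  simp only [ContinuousLinearMap.add_apply, ContinuousLinearMap.smul_apply,
    ContinuousLinearMap.coe_smul', Pi.smul_apply, ContinuousLinearMap.neg_apply,
    ContinuousLinearMap.comp_apply, innerSL_apply_apply, smul_eq_mul,
    InnerProductSpace.toDual_apply_apply, Pi.mul_apply, inner_add_left, real_inner_smul_left, hyinner, hK2, hone]
  rw [hG]
  have hBne : B y ≠ 0 := hBy.ne'
  have hβne : β y ≠ 0 := hβy.ne'
  have hqne : q y ≠ 0 := hqy.ne'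
  have hhne : h ≠ 0 := hhpos.ne'
  field_simp
  ring
end

section
/- Let E be a finite-dimensional real inner product space, b ∈ E a unit vector, and g a real number with -2 < g < 2. Let y ∈ E with v(y) = y - ⟨b,y⟩b ≠ 0, and write β = ⟨b,y⟩, v = v(y), q = ‖v‖, B = β² + g·q·β + q². Let κ be any nonzero real number (playing the role of K²/B). Define linear maps P, P̃ : E → E by P(h) = κ·( h + (g/B)·( q(β + g q)·⟨b,h⟩·b + q·(⟨b,h⟩·v + ⟨v,h⟩·b) - (β/q)·⟨v,h⟩·v ) ) and P̃(h) = κ⁻¹·( h + (g/B)·( -β q·⟨b,h⟩·b - q·(⟨b,h⟩·v + ⟨v,h⟩·b) + ((β + g q)/q)·⟨v,h⟩·v ) ). Then P̃ ∘ P = id_E, i.e. P̃ is the inverse of P. -/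
set_option maxHeartbeats 1000000 in
/-- The linear map `P̃` representing the claimed reciprocal tensor `g^{ij}` is indeed the
inverse of the linear map `P` representing the Finsleroid–Finsler metric tensor `g_{ij}`:
`P̃ ∘ P = id`. Here `β = ⟨b,y⟩`, `v = y - βb ≠ 0`, `q = ‖v‖`, `B = β² + gqβ + q²`, and
`κ ≠ 0` plays the role of `K²/B`. -/
theorem stmt_19 {E : Type*} [NormedAddCommGroup E] [InnerProductSpace ℝ E]
    [FiniteDimensional ℝ E]
    (b : E) (hb : ‖b‖ = 1) (g : ℝ) (hg₁ : -2 < g) (hg₂ : g < 2)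
    (y : E) (β : ℝ) (hβ : β = (inner ℝ b y : ℝ))
    (v : E) (hv : v = y - β • b) (hv0 : v ≠ 0)
    (q : ℝ) (hq : q = ‖v‖)
    (B : ℝ) (hB : B = β ^ 2 + g * q * β + q ^ 2)
    (κ : ℝ) (hκ : κ ≠ 0)
    (P Ptilde : E →ₗ[ℝ] E)
    (hP : ∀ x : E, P x =
      κ • (x + (g / B) •
        (((q * (β + g * q)) * (inner ℝ b x : ℝ)) • b +
          q • ((inner ℝ b x : ℝ) • v + (inner ℝ v x : ℝ) • b) -
          ((β / q) * (inner ℝ v x : ℝ)) • v)))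
    (hPt : ∀ x : E, Ptilde x =
      κ⁻¹ • (x + (g / B) •
        ((-(β * q) * (inner ℝ b x : ℝ)) • b -
          q • ((inner ℝ b x : ℝ) • v + (inner ℝ v x : ℝ) • b) +
          (((β + g * q) / q) * (inner ℝ v x : ℝ)) • v))) :
    Ptilde ∘ₗ P = LinearMap.id := by
  have hq0 : 0 < q := by rw [hq]; exact norm_pos_iff.mpr hv0
  have hqne : q ≠ 0 := ne_of_gt hq0
  have hB0 : 0 < B := by
    have hq2 : 0 < q ^ 2 := by positivity
    nlinarith [sq_nonneg (2 * β + g * q), mul_pos (mul_pos (by linarith : (0:ℝ) < 2 - g) (by linarith : (0:ℝ) < 2 + g)) hq2]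
  have hBne : B ≠ 0 := ne_of_gt hB0
  have hbb : (inner ℝ b b : ℝ) = 1 := by
    rw [real_inner_self_eq_norm_sq, hb]; norm_num
  have hbv : (inner ℝ b v : ℝ) = 0 := by
    rw [hv, inner_sub_right, inner_smul_right, hbb, hβ]; ring
  have hvb : (inner ℝ v b : ℝ) = 0 := by rw [real_inner_comm]; exact hbv
  have hvv : (inner ℝ v v : ℝ) = q ^ 2 := by
    rw [real_inner_self_eq_norm_sq, hq]
  ext x
  simp only [LinearMap.comp_apply, LinearMap.id_apply, hP, hPt]
  simp only [inner_add_right, inner_sub_right, inner_smul_right, real_inner_smul_right,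
    hbb, hbv, hvb, hvv, smul_add, smul_sub, smul_smul]
  match_scalars
  · field_simp
  · subst hB; field_simp [show β * (β + g * q) + q ^ 2 ≠ 0 by rw [show β * (β + g * q) + q ^ 2 = β ^ 2 + g * q * β + q ^ 2 by ring]; exact hBne]; ring
  · subst hB; field_simp [show β * (β + g * q) + q ^ 2 ≠ 0 by rw [show β * (β + g * q) + q ^ 2 = β ^ 2 + g * q * β + q ^ 2 by ring]; exact hBne]; ring
end
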